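/- The Fréchet distance d_f(c₀,c₁) := inf_φ sup_u |c₁(φ(u)) − c₀(u)| (infimum over diffeomorphisms φ of S¹) equals the distance d_∞(c₀,c₁) := inf_C ∫₀¹ sup_u |∂_v C(u,v)| dv, where the infimum is over smooth homotopies C with C(·,0) = c₀ and C(·,1) = c₁ ∘ φ for some diffeomorphism φ. -/

import Mathlib

open Real

/-- A lift of an (orientation preserving) diffeomorphism of the circle `ℝ/2πℤ`. -/
def IsDiffeoLift (φ : ℝ → ℝ) : Prop :=
  ContDiff ℝ (⊤ : ℕ∞) φ ∧ StrictMono φ ∧ (∀ u, φ (u + 2 * π) = φ u + 2 * π) ∧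
    ∀ u, deriv φ u ≠ 0

/-- The Fréchet distance `d_f(c₀,c₁) = inf_φ sup_u ‖c₁(φ(u)) - c₀(u)‖`. -/
noncomputable def frechetDist (n : ℕ) (c₀ c₁ : ℝ → EuclideanSpace ℝ (Fin n)) : ℝ :=
  sInf { r : ℝ | ∃ φ : ℝ → ℝ, IsDiffeoLift φ ∧ r = ⨆ u : ℝ, ‖c₁ (φ u) - c₀ u‖ }

/-- The distance induced by the Finsler `L^∞` metric:
`d_∞(c₀,c₁) = inf_C ∫₀¹ sup_u ‖∂ᵥC(u,v)‖ dv` over smooth homotopies `C` from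
`c₀` to some reparametrization `c₁ ∘ φ` of `c₁`. -/
noncomputable def dInfty (n : ℕ) (c₀ c₁ : ℝ → EuclideanSpace ℝ (Fin n)) : ℝ :=
  sInf { r : ℝ |
    ∃ (C : ℝ → ℝ → EuclideanSpace ℝ (Fin n)) (φ : ℝ → ℝ),
      IsDiffeoLift φ ∧
      ContDiff ℝ (⊤ : ℕ∞) (fun p : ℝ × ℝ => C p.1 p.2) ∧
      (∀ u v, C (u + 2 * π) v = C u v) ∧
      (∀ u, C u 0 = c₀ u) ∧ (∀ u, C u 1 = c₁ (φ u)) ∧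
      r = ∫ v in (0:ℝ)..1, ⨆ u : ℝ, ‖deriv (fun v' => C u v') v‖ }

/-- The Fréchet distance coincides with the distance induced by the Finsler
`L^∞` metric: `d_f = d_∞` (for smooth immersed closed curves, modeled as
2π-periodic maps `ℝ → ℝⁿ`). -/
theorem frechetDist_eq_dInfty
    (n : ℕ) (c₀ c₁ : ℝ → EuclideanSpace ℝ (Fin n))
    (hc₀ : ContDiff ℝ (⊤ : ℕ∞) c₀) (hc₁ : ContDiff ℝ (⊤ : ℕ∞) c₁)
    (hp₀ : ∀ u, c₀ (u + 2 * π) = c₀ u) (hp₁ : ∀ u, c₁ (u + 2 * π) = c₁ u)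
    (him₀ : ∀ u, deriv c₀ u ≠ 0) (him₁ : ∀ u, deriv c₁ u ≠ 0) :
    frechetDist n c₀ c₁ = dInfty n c₀ c₁ := by
  classical
  have h2π : (0 : ℝ) < 2 * π := Real.two_pi_pos
  have hle1 : (1 : WithTop ℕ∞) ≤ ((⊤ : ℕ∞) : WithTop ℕ∞) := by exact_mod_cast le_top
  have hid : IsDiffeoLift id :=
    ⟨contDiff_id, strictMono_id, fun _ => rfl, fun u => by simp⟩
  have hSfne : Set.Nonempty
      { r : ℝ | ∃ φ : ℝ → ℝ, IsDiffeoLift φ ∧ r = ⨆ u : ℝ, ‖c₁ (φ u) - c₀ u‖ } :=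
    ⟨_, id, hid, rfl⟩
  have hbddf : BddBelow
      { r : ℝ | ∃ φ : ℝ → ℝ, IsDiffeoLift φ ∧ r = ⨆ u : ℝ, ‖c₁ (φ u) - c₀ u‖ } := by
    refine ⟨0, ?_⟩
    rintro r ⟨φ, -, rfl⟩
    exact Real.iSup_nonneg fun u => norm_nonneg _
  have hbddi : BddBelow { r : ℝ |
      ∃ (C : ℝ → ℝ → EuclideanSpace ℝ (Fin n)) (φ : ℝ → ℝ),
        IsDiffeoLift φ ∧
        ContDiff ℝ (⊤ : ℕ∞) (fun p : ℝ × ℝ => C p.1 p.2) ∧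
        (∀ u v, C (u + 2 * π) v = C u v) ∧
        (∀ u, C u 0 = c₀ u) ∧ (∀ u, C u 1 = c₁ (φ u)) ∧
        r = ∫ v in (0:ℝ)..1, ⨆ u : ℝ, ‖deriv (fun v' => C u v') v‖ } := by
    refine ⟨0, ?_⟩
    rintro r ⟨C, φ, -, -, -, -, -, rfl⟩
    exact intervalIntegral.integral_nonneg zero_le_one fun v _ =>
      Real.iSup_nonneg fun u => norm_nonneg _
  -- `Sf ⊆ Si` via the linear interpolation homotopy.
  have hsub : { r : ℝ | ∃ φ : ℝ → ℝ, IsDiffeoLift φ ∧ r = ⨆ u : ℝ, ‖c₁ (φ u) - c₀ u‖ } ⊆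
      { r : ℝ |
      ∃ (C : ℝ → ℝ → EuclideanSpace ℝ (Fin n)) (φ : ℝ → ℝ),
        IsDiffeoLift φ ∧
        ContDiff ℝ (⊤ : ℕ∞) (fun p : ℝ × ℝ => C p.1 p.2) ∧
        (∀ u v, C (u + 2 * π) v = C u v) ∧
        (∀ u, C u 0 = c₀ u) ∧ (∀ u, C u 1 = c₁ (φ u)) ∧
        r = ∫ v in (0:ℝ)..1, ⨆ u : ℝ, ‖deriv (fun v' => C u v') v‖ } := by
    rintro r ⟨φ, hφ, rfl⟩
    refine ⟨fun u v => c₀ u + v • (c₁ (φ u) - c₀ u), φ, hφ, ?_, ?_, ?_, ?_, ?_⟩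
    · have h₁ : ContDiff ℝ (⊤ : ℕ∞) fun p : ℝ × ℝ => c₀ p.1 :=
        hc₀.comp contDiff_fst
      have h₂ : ContDiff ℝ (⊤ : ℕ∞) fun p : ℝ × ℝ => c₁ (φ p.1) :=
        hc₁.comp (hφ.1.comp contDiff_fst)
      exact h₁.add (contDiff_snd.smul (h₂.sub h₁))
    · intro u v; dsimp only; rw [hp₀ u, hφ.2.2.1 u, hp₁ (φ u)]
    · intro u; simp
    · intro u; simp
    · have hderiv : ∀ u v : ℝ,
          deriv (fun v' : ℝ => c₀ u + v' • (c₁ (φ u) - c₀ u)) v = c₁ (φ u) - c₀ u := by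
        intro u v
        have := (((hasDerivAt_id v).smul_const (c₁ (φ u) - c₀ u)).const_add (c₀ u)).deriv
        simpa using this
      simp only [hderiv]
      rw [intervalIntegral.integral_const]
      simp
  have hSine := hSfne.mono hsub
  refine le_antisymm ?_ (csInf_le_csInf hbddi hSfne hsub)
  -- the hard direction: `frechetDist ≤ dInfty`.
  refine le_csInf hSine ?_
  rintro r ⟨C, φ, hφ, hC, hper, hC0, hC1, rfl⟩
  -- the partial derivative in the second variable
  set Cf : ℝ × ℝ → EuclideanSpace ℝ (Fin n) := fun p => C p.1 p.2 with hCf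
  set D : ℝ × ℝ → EuclideanSpace ℝ (Fin n) := fun p => fderiv ℝ Cf p (0, 1) with hDdef
  have hCdiff : Differentiable ℝ Cf := hC.differentiable (by simp)
  have hD : ∀ u v : ℝ, HasDerivAt (fun v' => C u v') (D (u, v)) v := by
    intro u v
    have h1 : HasDerivAt (fun v' : ℝ => ((u, v') : ℝ × ℝ)) ((0 : ℝ), (1 : ℝ)) v :=
      HasDerivAt.prodMk (hasDerivAt_const v u) (hasDerivAt_id v)
    exact (hCdiff (u, v)).hasFDerivAt.comp_hasDerivAt v h1
  have hDcont : Continuous D :=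
    (hC.continuous_fderiv (by simp)).clm_apply continuous_const
  have hDper : ∀ u v : ℝ, D (u + 2 * π, v) = D (u, v) := by
    intro u v
    have h1 := hD (u + 2 * π) v
    have h2 : (fun v' => C (u + 2 * π) v') = fun v' => C u v' :=
      funext fun v' => hper u v'
    rw [h2] at h1
    exact h1.unique (hD u v)
  -- the norm of the partial derivative, and its supremum over `u`
  have hgcont : ∀ v : ℝ, Continuous fun u => ‖D (u, v)‖ := fun v =>
    (hDcont.comp (continuous_id.prodMk continuous_const)).norm
  have hrange : ∀ v : ℝ,
      Set.range (fun u => ‖D (u, v)‖) = (fun u => ‖D (u, v)‖) '' Set.Icc 0 (2 * π) := by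
    intro v
    have hper' : Function.Periodic (fun u => ‖D (u, v)‖) (2 * π) := fun u => by
      simp only [hDper u v]
    have := hper'.image_Icc h2π 0
    rw [zero_add] at this
    exact this.symm
  have hbddA : ∀ v : ℝ, BddAbove (Set.range fun u => ‖D (u, v)‖) := by
    intro v
    rw [hrange v]
    exact (isCompact_Icc.image (hgcont v)).bddAbove
  set F : ℝ → ℝ := fun v => sSup ((fun u => ‖D (u, v)‖) '' Set.Icc 0 (2 * π)) with hF
  have hFeq : ∀ v : ℝ, (⨆ u : ℝ, ‖D (u, v)‖) = F v := by
    intro v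
    rw [iSup, hrange v]
  have hFcont : Continuous F := by
    refine IsCompact.continuous_sSup (f := fun v u => ‖D (u, v)‖) isCompact_Icc ?_
    exact (hDcont.comp (continuous_snd.prodMk continuous_fst)).norm
  have hFle : ∀ u v : ℝ, ‖D (u, v)‖ ≤ F v := by
    intro u v
    rw [← hFeq v]
    exact le_ciSup (hbddA v) u
  have hFnonneg : ∀ v : ℝ, 0 ≤ F v := fun v =>
    Real.sSup_nonneg (by rintro x ⟨u, -, rfl⟩; exact norm_nonneg _)
  -- rewrite the integrand
  have hint_eq : (fun v => ⨆ u : ℝ, ‖deriv (fun v' => C u v') v‖) = F := by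
    funext v
    rw [← hFeq v]
    congr 1
    funext u
    rw [(hD u v).deriv]
  rw [hint_eq]
  -- the key estimate: for every `u`, `‖c₁ (φ u) - c₀ u‖ ≤ ∫₀¹ F`
  have hkey : ∀ u : ℝ, ‖c₁ (φ u) - c₀ u‖ ≤ ∫ v in (0:ℝ)..1, F v := by
    intro u
    have hfund : c₁ (φ u) - c₀ u = ∫ v in (0:ℝ)..1, D (u, v) := by
      rw [← hC1 u, ← hC0 u]
      exact (intervalIntegral.integral_eq_sub_of_hasDerivAt (fun v _ => hD u v)
        ((hDcont.comp (continuous_const.prodMk continuous_id)).intervalIntegrable 0 1)).symm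
    rw [hfund]
    calc ‖∫ v in (0:ℝ)..1, D (u, v)‖ ≤ ∫ v in (0:ℝ)..1, ‖D (u, v)‖ :=
          intervalIntegral.norm_integral_le_integral_norm zero_le_one
      _ ≤ ∫ v in (0:ℝ)..1, F v := by
          refine intervalIntegral.integral_mono_on zero_le_one ?_ ?_ fun v _ => hFle u v
          · exact ((hDcont.comp (continuous_const.prodMk continuous_id)).norm).intervalIntegrable 0 1
          · exact hFcont.intervalIntegrable 0 1
  have hrnonneg : 0 ≤ ∫ v in (0:ℝ)..1, F v :=
    intervalIntegral.integral_nonneg zero_le_one fun v _ => hFnonneg v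
  refine csInf_le_of_le hbddf ⟨φ, hφ, rfl⟩ ?_
  exact Real.iSup_le hkey hrnonneg
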